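/- (Security of privacy amplification against quantum adversaries) Let X be a random variable with distribution P_X on a finite set 𝒳 satisfying Σ_{x∈𝒳} P_X(x)² ≤ 2^{−n} (i.e., Rényi entropy of order 2 at least n), let k, s be natural numbers, and let G be a two-universal random function from 𝒳 to {0,1}^k, independent of X. Then for every family {ρ_x}_{x∈𝒳} of density matrices on ℂ^{2^s}, d(G(X)|⟨ρ_X,G⟩) ≤ (3/4)·2^{−(n−s−k)/2}. -/

import Mathlib

open Finset ComplexOrder

/-- The distance of a distribution `P` on a finite set `Z` from the uniform
distribution: `d(P) = (1/2) ∑_z |P z - 1/|Z||`. -/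
noncomputable def distUnif {Z : Type*} [Fintype Z] (P : Z → ℝ) : ℝ :=
  (1 / 2) * ∑ z, |P z - 1 / (Fintype.card Z : ℝ)|

/-- For a joint distribution `P` on `W × Z` (given as `P : W → Z → ℝ`), the expected
distance of `Z` from uniform given `W`: `d(Z|W) = ∑_w P_W(w) · d(P_{Z|W=w})`. -/
noncomputable def dCond {W Z : Type*} [Fintype W] [Fintype Z] (P : W → Z → ℝ) : ℝ :=
  ∑ w, (∑ z, P w z) * distUnif (fun z => P w z / ∑ z', P w z')

/-- A POVM on `ℂ^d` with an arbitrary finite outcome set: a family `{E_w}` of positive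
semidefinite `d×d` complex matrices summing to the identity. -/
structure POVM (d : ℕ) where
  ι : Type
  [fin : Fintype ι]
  E : ι → Matrix (Fin d) (Fin d) ℂ
  psd : ∀ w, (E w).PosSemidef
  sum_eq : ∑ w, E w = 1

attribute [instance] POVM.fin

/-- Given `X` with distribution `PX` on `𝒳`, a family `{ρ_x}` of density matrices on
`ℂ^d`, and a function `g : 𝒳 → 𝒵`, the distance of `g(X)` from uniform given `ρ_X`:
the supremum over all POVMs `{E_w}` (with arbitrary finite outcome sets) of
`d(g(X)|W)`, where `W` is the measurement outcome, with joint distribution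
`P_{X W}(x,w) = PX x · tr(E_w ρ_x)`. -/
noncomputable def dQuant {d : ℕ} {𝒳 𝒵 : Type} [Fintype 𝒳] [Fintype 𝒵] [DecidableEq 𝒵]
    (PX : 𝒳 → ℝ) (ρ : 𝒳 → Matrix (Fin d) (Fin d) ℂ) (g : 𝒳 → 𝒵) : ℝ :=
  sSup {r : ℝ | ∃ M : POVM d,
    r = dCond (fun (w : M.ι) (z : 𝒵) =>
      ∑ x ∈ univ.filter (fun x => g x = z), PX x * ((M.E w) * ρ x).trace.re)}

namespace PAaux
open Matrix
variable {d : ℕ}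

lemma psd_diag_nonneg {A : Matrix (Fin d) (Fin d) ℂ} (hA : A.PosSemidef) (i : Fin d) :
    (0:ℂ) ≤ A i i := by
  simpa [dotProduct, Pi.single_apply, Matrix.mulVec] using hA.dotProduct_mulVec_nonneg (Pi.single i 1)

lemma psd_trace_re_nonneg {A : Matrix (Fin d) (Fin d) ℂ} (hA : A.PosSemidef) :
    0 ≤ A.trace.re := by
  rw [Matrix.trace, Complex.re_sum]
  exact Finset.sum_nonneg fun i _ => (Complex.nonneg_iff.mp (psd_diag_nonneg hA i)).1

lemma trace_mul_psd_re_nonneg {A B : Matrix (Fin d) (Fin d) ℂ}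
    (hA : A.PosSemidef) (hB : B.PosSemidef) : 0 ≤ (A * B).trace.re := by
  obtain ⟨C, rfl⟩ : ∃ C : Matrix (Fin d) (Fin d) ℂ, B = Cᴴ * C := by
    open scoped MatrixOrder Matrix.Norms.L2Operator in
    obtain ⟨C, rfl⟩ := CStarAlgebra.nonneg_iff_eq_star_mul_self.mp hB.nonneg
    exact ⟨C, rfl⟩
  have : (A * (Cᴴ * C)).trace = (C * A * Cᴴ).trace := by
    rw [← Matrix.mul_assoc, Matrix.trace_mul_comm, Matrix.mul_assoc]
  rw [this]
  exact psd_trace_re_nonneg (hA.mul_mul_conjTranspose_same C)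

lemma trace_unitary_conj {U D : Matrix (Fin d) (Fin d) ℂ}
    (hU : U ∈ Matrix.unitaryGroup (Fin d) ℂ) : (U * D * star U).trace = D.trace := by
  rw [Matrix.trace_mul_cycle, Matrix.mem_unitaryGroup_iff'.mp hU, Matrix.one_mul]

lemma herm_trace_eq {A : Matrix (Fin d) (Fin d) ℂ} (hA : A.IsHermitian) :
    A.trace = ∑ i, (hA.eigenvalues i : ℂ) := by
  conv_lhs => rw [hA.spectral_theorem, Unitary.conjStarAlgAut_apply]
  rw [trace_unitary_conj (hA.eigenvectorUnitary).2, Matrix.trace_diagonal]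
  rfl

lemma herm_trace_sq_eq {A : Matrix (Fin d) (Fin d) ℂ} (hA : A.IsHermitian) :
    (A * A).trace = ∑ i, ((hA.eigenvalues i : ℂ)) ^ 2 := by
  set U : Matrix (Fin d) (Fin d) ℂ := (hA.eigenvectorUnitary : Matrix (Fin d) (Fin d) ℂ) with hUdef
  have hsq : A * A = U * (Matrix.diagonal (fun i => (hA.eigenvalues i : ℂ) ^ 2)) * star U := by
    conv_lhs => rw [hA.spectral_theorem, Unitary.conjStarAlgAut_apply]
    have h1 : star U * U = 1 := Matrix.mem_unitaryGroup_iff'.mp (hA.eigenvectorUnitary).2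
    calc (U * Matrix.diagonal (RCLike.ofReal ∘ hA.eigenvalues) * star U) *
          (U * Matrix.diagonal (RCLike.ofReal ∘ hA.eigenvalues) * star U)
        = U * (Matrix.diagonal (RCLike.ofReal ∘ hA.eigenvalues) * (star U * U) *
            Matrix.diagonal (RCLike.ofReal ∘ hA.eigenvalues)) * star U := by
          simp only [Matrix.mul_assoc]
      _ = U * (Matrix.diagonal (fun i => (hA.eigenvalues i : ℂ) ^ 2)) * star U := by
          rw [h1, Matrix.mul_one, Matrix.diagonal_mul_diagonal]
          congr 1
          ext i
          simp [sq]
  rw [hsq, trace_unitary_conj (hA.eigenvectorUnitary).2, Matrix.trace_diagonal]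

lemma herm_trace_sq_re_nonneg {A : Matrix (Fin d) (Fin d) ℂ} (hA : A.IsHermitian) :
    0 ≤ (A * A).trace.re := by
  rw [herm_trace_sq_eq hA, Complex.re_sum]
  refine Finset.sum_nonneg fun i _ => ?_
  rw [← Complex.ofReal_pow, Complex.ofReal_re]
  positivity

lemma trace_sq_re_le_one {A : Matrix (Fin d) (Fin d) ℂ} (hA : A.PosSemidef)
    (h1 : A.trace = 1) : (A * A).trace.re ≤ 1 := by
  have he : ∑ i, hA.1.eigenvalues i = 1 := by
    have := herm_trace_eq hA.1
    rw [h1] at this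
    have := congrArg Complex.re this.symm
    simpa [Complex.re_sum] using this
  have h2 : (A * A).trace.re = ∑ i, hA.1.eigenvalues i ^ 2 := by
    rw [herm_trace_sq_eq hA.1, Complex.re_sum]
    congr 1; funext i
    rw [← Complex.ofReal_pow, Complex.ofReal_re]
  rw [h2]
  calc ∑ i, hA.1.eigenvalues i ^ 2 ≤ (∑ i, hA.1.eigenvalues i) ^ 2 :=
        Finset.sum_sq_le_sq_sum_of_nonneg fun i _ => hA.eigenvalues_nonneg i
    _ = 1 := by rw [he]; norm_num

lemma herm_smul {c : ℂ} (hc : star c = c) {A : Matrix (Fin d) (Fin d) ℂ}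
    (hA : A.IsHermitian) : (c • A).IsHermitian := by
  unfold Matrix.IsHermitian at *
  rw [Matrix.conjTranspose_smul, hc, hA]

lemma herm_sum {α : Type*} [Fintype α] (s : Finset α) (f : α → Matrix (Fin d) (Fin d) ℂ)
    (hf : ∀ a, (f a).IsHermitian) : (∑ a ∈ s, f a).IsHermitian := by
  unfold Matrix.IsHermitian at *
  rw [Matrix.conjTranspose_sum]
  exact Finset.sum_congr rfl fun a _ => hf a

lemma povm_sum_abs_le (M : POVM d) {Δ : Matrix (Fin d) (Fin d) ℂ} (hΔ : Δ.IsHermitian) :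
    ∑ w, |((M.E w) * Δ).trace.re| ≤ Real.sqrt (d * (Δ * Δ).trace.re) := by
  classical
  set U : Matrix (Fin d) (Fin d) ℂ := (hΔ.eigenvectorUnitary : Matrix (Fin d) (Fin d) ℂ)
  set lam := hΔ.eigenvalues
  set Dp : Matrix (Fin d) (Fin d) ℂ :=
    U * Matrix.diagonal (fun i => ((max (lam i) 0 : ℝ) : ℂ)) * star U with hDp
  set Dm : Matrix (Fin d) (Fin d) ℂ :=
    U * Matrix.diagonal (fun i => ((max (-lam i) 0 : ℝ) : ℂ)) * star U with hDm
  have hUmem := hΔ.eigenvectorUnitary.2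
  have hDpPsd : Dp.PosSemidef := by
    rw [hDp, Matrix.star_eq_conjTranspose]
    exact (Matrix.posSemidef_diagonal_iff.mpr fun i =>
      Complex.zero_le_real.mpr (le_max_right _ _)).mul_mul_conjTranspose_same U
  have hDmPsd : Dm.PosSemidef := by
    rw [hDm, Matrix.star_eq_conjTranspose]
    exact (Matrix.posSemidef_diagonal_iff.mpr fun i =>
      Complex.zero_le_real.mpr (le_max_right _ _)).mul_mul_conjTranspose_same U
  have hsplit : Δ = Dp - Dm := by
    conv_lhs => rw [hΔ.spectral_theorem, Unitary.conjStarAlgAut_apply]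
    have hdiag : (Matrix.diagonal (RCLike.ofReal ∘ hΔ.eigenvalues) : Matrix (Fin d) (Fin d) ℂ)
        = Matrix.diagonal (fun i => ((max (lam i) 0 : ℝ) : ℂ))
          - Matrix.diagonal (fun i => ((max (-lam i) 0 : ℝ) : ℂ)) := by
      rw [Matrix.diagonal_sub]
      refine congrArg Matrix.diagonal (funext fun i => ?_)
      show (lam i : ℂ) = ((max (lam i) 0 : ℝ) : ℂ) - ((max (-lam i) 0 : ℝ) : ℂ)
      rw [← Complex.ofReal_sub, max_zero_sub_max_neg_zero_eq_self]
    rw [hDp, hDm, ← Matrix.sub_mul, ← Matrix.mul_sub, ← hdiag]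
  have htr : ∀ w, ((M.E w) * Δ).trace.re
      = ((M.E w) * Dp).trace.re - ((M.E w) * Dm).trace.re := by
    intro w
    rw [hsplit, Matrix.mul_sub, Matrix.trace_sub, Complex.sub_re]
  have habs : ∀ w, |((M.E w) * Δ).trace.re|
      ≤ ((M.E w) * Dp).trace.re + ((M.E w) * Dm).trace.re := by
    intro w
    rw [htr w]
    have h1 := trace_mul_psd_re_nonneg (M.psd w) hDpPsd
    have h2 := trace_mul_psd_re_nonneg (M.psd w) hDmPsd
    rw [abs_sub_comm]
    calc |((M.E w) * Dm).trace.re - ((M.E w) * Dp).trace.re|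
        ≤ |((M.E w) * Dm).trace.re| + |((M.E w) * Dp).trace.re| := abs_sub _ _
      _ = ((M.E w) * Dp).trace.re + ((M.E w) * Dm).trace.re := by
          rw [abs_of_nonneg h1, abs_of_nonneg h2]; ring
  have hsum : ∀ (B : Matrix (Fin d) (Fin d) ℂ),
      ∑ w, ((M.E w) * B).trace.re = B.trace.re := by
    intro B
    rw [← Complex.re_sum, ← Matrix.trace_sum]
    congr 2
    rw [← Matrix.sum_mul, M.sum_eq, Matrix.one_mul]
  have hDptr : Dp.trace = ∑ i, ((max (lam i) 0 : ℝ) : ℂ) := by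
    rw [hDp, trace_unitary_conj hUmem, Matrix.trace_diagonal]
  have hDmtr : Dm.trace = ∑ i, ((max (-lam i) 0 : ℝ) : ℂ) := by
    rw [hDm, trace_unitary_conj hUmem, Matrix.trace_diagonal]
  have step1 : ∑ w, |((M.E w) * Δ).trace.re| ≤ ∑ i, |lam i| := by
    calc ∑ w, |((M.E w) * Δ).trace.re|
        ≤ ∑ w, (((M.E w) * Dp).trace.re + ((M.E w) * Dm).trace.re) :=
          Finset.sum_le_sum fun w _ => habs w
      _ = Dp.trace.re + Dm.trace.re := by rw [Finset.sum_add_distrib, hsum, hsum]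
      _ = ∑ i, (max (lam i) 0 + max (-lam i) 0) := by
          rw [hDptr, hDmtr, Complex.re_sum, Complex.re_sum, ← Finset.sum_add_distrib]
          simp
      _ = ∑ i, |lam i| := by
          congr 1; funext i; exact max_zero_add_max_neg_zero_eq_abs_self _
  have hCS : (∑ i, |lam i|) ^ 2 ≤ d * ∑ i, lam i ^ 2 := by
    have := sq_sum_le_card_mul_sum_sq (s := Finset.univ) (f := fun i => |lam i|)
    simpa [sq_abs] using this
  have htrsq : (Δ * Δ).trace.re = ∑ i, lam i ^ 2 := by
    rw [herm_trace_sq_eq hΔ, Complex.re_sum]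
    congr 1; funext i
    rw [← Complex.ofReal_pow, Complex.ofReal_re]
  refine step1.trans ?_
  rw [htrsq]
  have h0 : 0 ≤ ∑ i, |lam i| := Finset.sum_nonneg fun i _ => abs_nonneg _
  calc ∑ i, |lam i| = Real.sqrt ((∑ i, |lam i|) ^ 2) := (Real.sqrt_sq h0).symm
    _ ≤ Real.sqrt (d * ∑ i, lam i ^ 2) := Real.sqrt_le_sqrt hCS



lemma dCond_eq_of_nonneg {W Z : Type*} [Fintype W] [Fintype Z] (P : W → Z → ℝ)
    (h0 : ∀ w z, 0 ≤ P w z) :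
    dCond P = (1/2) * ∑ w, ∑ z, |P w z - (∑ z', P w z') / (Fintype.card Z : ℝ)| := by
  rw [dCond, Finset.mul_sum]
  refine Finset.sum_congr rfl fun w _ => ?_
  rcases eq_or_lt_of_le (Finset.sum_nonneg fun z _ => h0 w z) with hQ | hQ
  · have hz : ∀ z, P w z = 0 := by
      intro z
      have := (Finset.sum_eq_zero_iff_of_nonneg (fun z _ => h0 w z)).mp hQ.symm
      exact this z (Finset.mem_univ z)
    simp [hz, ← hQ]
  · rw [distUnif]
    have hQ' : (∑ z', P w z') ≠ 0 := ne_of_gt hQ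
    rw [← mul_assoc, mul_comm (∑ z, P w z) (1/2 : ℝ), mul_assoc, Finset.mul_sum]
    congr 1
    refine Finset.sum_congr rfl fun z _ => ?_
    rw [← abs_of_pos hQ, ← abs_mul, abs_of_pos hQ]
    congr 1
    field_simp


lemma trre_sum_right {α : Type*} (A : Matrix (Fin d) (Fin d) ℂ) (s : Finset α)
    (f : α → Matrix (Fin d) (Fin d) ℂ) :
    (A * ∑ i ∈ s, f i).trace.re = ∑ i ∈ s, (A * f i).trace.re := by
  rw [Matrix.mul_sum, Matrix.trace_sum, Complex.re_sum]

lemma trre_sum_left {α : Type*} (A : Matrix (Fin d) (Fin d) ℂ) (s : Finset α)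
    (f : α → Matrix (Fin d) (Fin d) ℂ) :
    ((∑ i ∈ s, f i) * A).trace.re = ∑ i ∈ s, (f i * A).trace.re := by
  rw [Matrix.sum_mul, Matrix.trace_sum, Complex.re_sum]

lemma trre_smul_real_right (A : Matrix (Fin d) (Fin d) ℂ) (r : ℝ)
    (B : Matrix (Fin d) (Fin d) ℂ) :
    (A * ((r : ℂ) • B)).trace.re = r * (A * B).trace.re := by
  rw [Matrix.mul_smul, Matrix.trace_smul, smul_eq_mul]
  simp [Complex.mul_re]

lemma trre_smul_real_left (A : Matrix (Fin d) (Fin d) ℂ) (r : ℝ)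
    (B : Matrix (Fin d) (Fin d) ℂ) :
    (((r : ℂ) • B) * A).trace.re = r * (B * A).trace.re := by
  rw [Matrix.smul_mul, Matrix.trace_smul, smul_eq_mul]
  simp [Complex.mul_re]

lemma trre_sub_right (A B C : Matrix (Fin d) (Fin d) ℂ) :
    (A * (B - C)).trace.re = (A * B).trace.re - (A * C).trace.re := by
  rw [Matrix.mul_sub, Matrix.trace_sub, Complex.sub_re]

lemma trre_sub_left (A B C : Matrix (Fin d) (Fin d) ℂ) :
    ((B - C) * A).trace.re = (B * A).trace.re - (C * A).trace.re := by
  rw [Matrix.sub_mul, Matrix.trace_sub, Complex.sub_re]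

lemma trre_comm (A B : Matrix (Fin d) (Fin d) ℂ) :
    (A * B).trace.re = (B * A).trace.re := by rw [Matrix.trace_mul_comm]

end PAaux

/-- The matrix `Δ_{g,z} = ρ_{g,z} - (1/N) ρ̄`. -/
noncomputable def PAaux.Delta {d : ℕ} {𝒳 𝒵 : Type} [Fintype 𝒳] [Fintype 𝒵] [DecidableEq 𝒵]
    (PX : 𝒳 → ℝ) (ρ : 𝒳 → Matrix (Fin d) (Fin d) ℂ) (g : 𝒳 → 𝒵) (z : 𝒵) :
    Matrix (Fin d) (Fin d) ℂ :=
  (∑ x ∈ Finset.univ.filter (fun x => g x = z), (PX x : ℂ) • ρ x)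
    - (Complex.ofReal ((Fintype.card 𝒵 : ℝ)⁻¹)) • ∑ x, (PX x : ℂ) • ρ x

noncomputable def PAaux.Sg {d : ℕ} {𝒳 𝒵 : Type} [Fintype 𝒳] [Fintype 𝒵] [DecidableEq 𝒵]
    (PX : 𝒳 → ℝ) (ρ : 𝒳 → Matrix (Fin d) (Fin d) ℂ) (g : 𝒳 → 𝒵) : ℝ :=
  ∑ z, (PAaux.Delta PX ρ g z * PAaux.Delta PX ρ g z).trace.re

namespace PAaux
variable {d : ℕ} {𝒳 𝒵 : Type} [Fintype 𝒳] [Fintype 𝒵] [DecidableEq 𝒵]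

lemma delta_isHermitian (PX : 𝒳 → ℝ) (ρ : 𝒳 → Matrix (Fin d) (Fin d) ℂ)
    (hρ : ∀ x, (ρ x).PosSemidef) (g : 𝒳 → 𝒵) (z : 𝒵) :
    (Delta PX ρ g z).IsHermitian := by
  have h1 : ∀ (s : Finset 𝒳), (∑ x ∈ s, (PX x : ℂ) • ρ x).IsHermitian := fun s =>
    herm_sum s _ fun x => herm_smul (by simp [Complex.star_def]) (hρ x).1
  exact Matrix.IsHermitian.sub (h1 _) (herm_smul (by simp [Complex.star_def]) (h1 _))

lemma Sg_nonneg (PX : 𝒳 → ℝ) (ρ : 𝒳 → Matrix (Fin d) (Fin d) ℂ)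
    (hρ : ∀ x, (ρ x).PosSemidef) (g : 𝒳 → 𝒵) : 0 ≤ Sg PX ρ g :=
  Finset.sum_nonneg fun z _ => herm_trace_sq_re_nonneg (delta_isHermitian PX ρ hρ g z)

end PAaux

namespace PAaux
variable {d : ℕ} {𝒳 𝒵 : Type} [Fintype 𝒳] [Fintype 𝒵] [DecidableEq 𝒵]

lemma dQuant_le_sqrt (PX : 𝒳 → ℝ) (hPX0 : ∀ x, 0 ≤ PX x)
    (ρ : 𝒳 → Matrix (Fin d) (Fin d) ℂ) (hρ : ∀ x, (ρ x).PosSemidef) (g : 𝒳 → 𝒵) :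
    dQuant PX ρ g ≤ (1/2) * Real.sqrt (d * (Fintype.card 𝒵) * Sg PX ρ g) := by
  refine Real.sSup_le ?_ (by positivity)
  rintro r ⟨M, rfl⟩
  have hP0 : ∀ (w : M.ι) (z : 𝒵),
      0 ≤ ∑ x ∈ univ.filter (fun x => g x = z), PX x * ((M.E w) * ρ x).trace.re :=
    fun w z => Finset.sum_nonneg fun x _ =>
      mul_nonneg (hPX0 x) (trace_mul_psd_re_nonneg (M.psd w) (hρ x))
  rw [dCond_eq_of_nonneg _ hP0]
  have h1 : ∀ (w : M.ι) (s : Finset 𝒳), ((M.E w) * ∑ x ∈ s, (PX x:ℂ) • ρ x).trace.re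
      = ∑ x ∈ s, PX x * ((M.E w) * ρ x).trace.re := by
    intro w s
    rw [trre_sum_right]
    exact Finset.sum_congr rfl fun x _ => trre_smul_real_right _ _ _
  have key : ∀ (w : M.ι) (z : 𝒵),
      (∑ x ∈ univ.filter (fun x => g x = z), PX x * ((M.E w) * ρ x).trace.re)
        - (∑ z', ∑ x ∈ univ.filter (fun x => g x = z'), PX x * ((M.E w) * ρ x).trace.re)
            / (Fintype.card 𝒵 : ℝ)
      = ((M.E w) * Delta PX ρ g z).trace.re := by
    intro w z
    have h2 : ∑ z', ∑ x ∈ univ.filter (fun x => g x = z'), PX x * ((M.E w) * ρ x).trace.re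
        = ((M.E w) * ∑ x, (PX x:ℂ) • ρ x).trace.re := by
      rw [h1 w univ]
      exact (Finset.sum_fiberwise univ g fun x => PX x * ((M.E w) * ρ x).trace.re)
    rw [Delta, trre_sub_right, h1, trre_smul_real_right, h2, div_eq_inv_mul]
  simp only [key]
  rw [Finset.sum_comm]
  have step2 : ∑ z, ∑ w, |((M.E w) * Delta PX ρ g z).trace.re|
      ≤ ∑ z : 𝒵, Real.sqrt (d * (Delta PX ρ g z * Delta PX ρ g z).trace.re) :=
    Finset.sum_le_sum fun z _ => povm_sum_abs_le M (delta_isHermitian PX ρ hρ g z)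
  have step3 : ∑ z : 𝒵, Real.sqrt (d * (Delta PX ρ g z * Delta PX ρ g z).trace.re)
      ≤ Real.sqrt ((Fintype.card 𝒵) *
          ∑ z : 𝒵, d * (Delta PX ρ g z * Delta PX ρ g z).trace.re) := by
    set a : 𝒵 → ℝ := fun z => d * (Delta PX ρ g z * Delta PX ρ g z).trace.re with ha
    have ha0 : ∀ z, 0 ≤ a z := fun z =>
      mul_nonneg (Nat.cast_nonneg d) (herm_trace_sq_re_nonneg (delta_isHermitian PX ρ hρ g z))
    have hCS : (∑ z, Real.sqrt (a z)) ^ 2 ≤ (Fintype.card 𝒵) * ∑ z, a z := by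
      have := sq_sum_le_card_mul_sum_sq (s := (univ : Finset 𝒵)) (f := fun z => Real.sqrt (a z))
      simp only [Finset.card_univ] at this
      calc (∑ z, Real.sqrt (a z)) ^ 2
          ≤ (Fintype.card 𝒵) * ∑ z, Real.sqrt (a z) ^ 2 := this
        _ = (Fintype.card 𝒵) * ∑ z, a z := by
            congr 1
            exact Finset.sum_congr rfl fun z _ => Real.sq_sqrt (ha0 z)
    have h0 : 0 ≤ ∑ z, Real.sqrt (a z) := Finset.sum_nonneg fun z _ => Real.sqrt_nonneg _
    calc ∑ z, Real.sqrt (a z) = Real.sqrt ((∑ z, Real.sqrt (a z)) ^ 2) :=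
          (Real.sqrt_sq h0).symm
      _ ≤ _ := Real.sqrt_le_sqrt hCS
  have hfin : ((Fintype.card 𝒵) : ℝ) *
      ∑ z : 𝒵, d * (Delta PX ρ g z * Delta PX ρ g z).trace.re
      = d * (Fintype.card 𝒵) * Sg PX ρ g := by
    rw [Sg, ← Finset.mul_sum]
    ring
  calc (1/2) * ∑ z, ∑ w, |((M.E w) * Delta PX ρ g z).trace.re|
      ≤ (1/2) * Real.sqrt ((Fintype.card 𝒵) *
          ∑ z : 𝒵, d * (Delta PX ρ g z * Delta PX ρ g z).trace.re) := by
        have := step2.trans step3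
        nlinarith [this]
    _ = (1/2) * Real.sqrt (d * (Fintype.card 𝒵) * Sg PX ρ g) := by rw [hfin]

end PAaux

namespace PAaux
variable {d : ℕ} {𝒳 𝒵 : Type} [Fintype 𝒳] [Fintype 𝒵] [DecidableEq 𝒵]

lemma Sg_eq (PX : 𝒳 → ℝ) (ρ : 𝒳 → Matrix (Fin d) (Fin d) ℂ) (g : 𝒳 → 𝒵)
    (hN : 0 < Fintype.card 𝒵) :
    Sg PX ρ g = (∑ x, ∑ x', if g x' = g x then PX x * (PX x' * (ρ x * ρ x').trace.re) else 0)
      - (Fintype.card 𝒵 : ℝ)⁻¹ * ∑ x, ∑ x', PX x * (PX x' * (ρ x * ρ x').trace.re) := by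
  classical
  set N : ℝ := (Fintype.card 𝒵 : ℝ) with hNdef
  have hN0 : N ≠ 0 := by positivity
  set ρb : Matrix (Fin d) (Fin d) ℂ := ∑ x, (PX x : ℂ) • ρ x with hρb
  set R : 𝒵 → Matrix (Fin d) (Fin d) ℂ :=
    fun z => ∑ x ∈ univ.filter (fun x => g x = z), (PX x : ℂ) • ρ x with hR
  have hmul : ∀ (s s' : Finset 𝒳),
      ((∑ x ∈ s, (PX x:ℂ) • ρ x) * (∑ x' ∈ s', (PX x':ℂ) • ρ x')).trace.re
      = ∑ x ∈ s, ∑ x' ∈ s', PX x * (PX x' * (ρ x * ρ x').trace.re) := by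
    intro s s'
    rw [trre_sum_left]
    refine Finset.sum_congr rfl fun x _ => ?_
    rw [trre_smul_real_left, trre_sum_right, Finset.mul_sum]
    exact Finset.sum_congr rfl fun x' _ => by rw [trre_smul_real_right]
  have hterm : ∀ z, (Delta PX ρ g z * Delta PX ρ g z).trace.re
      = (R z * R z).trace.re - 2 * N⁻¹ * (R z * ρb).trace.re
        + N⁻¹ * N⁻¹ * (ρb * ρb).trace.re := by
    intro z
    have hD : Delta PX ρ g z = R z - Complex.ofReal N⁻¹ • ρb := rfl
    rw [hD, trre_sub_left, trre_sub_right, trre_sub_right, trre_smul_real_right,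
      trre_smul_real_left, trre_smul_real_left, trre_smul_real_right,
      trre_comm ρb (R z)]
    ring
  have hsumRρ : ∑ z, (R z * ρb).trace.re = (ρb * ρb).trace.re := by
    have h1 : ∀ z, (R z * ρb).trace.re
        = ∑ x ∈ univ.filter (fun x => g x = z), PX x * (ρ x * ρb).trace.re := by
      intro z
      rw [hR, trre_sum_left]
      exact Finset.sum_congr rfl fun x _ => trre_smul_real_left _ _ _
    have h2 : (ρb * ρb).trace.re = ∑ x, PX x * (ρ x * ρb).trace.re := by
      conv_lhs => rw [hρb]
      rw [trre_sum_left]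
      exact Finset.sum_congr rfl fun x _ => trre_smul_real_left _ _ _
    rw [h2]
    simp only [h1]
    exact Finset.sum_fiberwise univ g fun x => PX x * (ρ x * ρb).trace.re
  have hsumRR : ∑ z, (R z * R z).trace.re
      = ∑ x, ∑ x', if g x' = g x then PX x * (PX x' * (ρ x * ρ x').trace.re) else 0 := by
    have h1 : ∀ z, (R z * R z).trace.re
        = ∑ x ∈ univ.filter (fun x => g x = z),
            ∑ x', if g x' = z then PX x * (PX x' * (ρ x * ρ x').trace.re) else 0 := by
      intro z
      rw [hR, hmul]
      refine Finset.sum_congr rfl fun x _ => ?_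
      rw [Finset.sum_filter]
    have h2 : ∀ z, ∀ x ∈ univ.filter (fun x => g x = z),
        (∑ x', if g x' = z then PX x * (PX x' * (ρ x * ρ x').trace.re) else 0)
        = ∑ x', if g x' = g x then PX x * (PX x' * (ρ x * ρ x').trace.re) else 0 := by
      intro z x hx
      rw [Finset.mem_filter] at hx
      rw [hx.2]
    calc ∑ z, (R z * R z).trace.re
        = ∑ z, ∑ x ∈ univ.filter (fun x => g x = z),
            ∑ x', if g x' = g x then PX x * (PX x' * (ρ x * ρ x').trace.re) else 0 := by
          refine Finset.sum_congr rfl fun z _ => ?_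
          rw [h1]
          exact Finset.sum_congr rfl (h2 z)
      _ = _ := Finset.sum_fiberwise univ g _
  have hcard : (Fintype.card 𝒵 : ℝ) * (N⁻¹ * N⁻¹) = N⁻¹ := by
    rw [← hNdef, ← mul_assoc, mul_inv_cancel₀ hN0, one_mul]
  calc Sg PX ρ g
      = ∑ z, ((R z * R z).trace.re - 2 * N⁻¹ * (R z * ρb).trace.re
          + N⁻¹ * N⁻¹ * (ρb * ρb).trace.re) := Finset.sum_congr rfl fun z _ => hterm z
    _ = (∑ z, (R z * R z).trace.re) - 2 * N⁻¹ * (∑ z, (R z * ρb).trace.re)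
          + (Fintype.card 𝒵 : ℝ) * (N⁻¹ * N⁻¹ * (ρb * ρb).trace.re) := by
        rw [Finset.sum_add_distrib, Finset.sum_sub_distrib, ← Finset.mul_sum,
          Finset.sum_const, Finset.card_univ, nsmul_eq_mul]
    _ = (∑ x, ∑ x', if g x' = g x then PX x * (PX x' * (ρ x * ρ x').trace.re) else 0)
          - N⁻¹ * (ρb * ρb).trace.re := by
        rw [hsumRR, hsumRρ, ← mul_assoc, hcard]
        ring
    _ = _ := by rw [hρb, hmul univ univ]

end PAaux

namespace PAaux

lemma jensen_sqrt {α : Type*} [Fintype α] (p q : α → ℝ) (hp : ∀ a, 0 ≤ p a)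
    (hq : ∀ a, 0 ≤ q a) (hp1 : ∑ a, p a = 1) :
    ∑ a, p a * Real.sqrt (q a) ≤ Real.sqrt (∑ a, p a * q a) := by
  have hterm : ∀ a, p a * Real.sqrt (q a) = Real.sqrt (p a) * Real.sqrt (p a * q a) := by
    intro a
    rw [Real.sqrt_mul (hp a), ← mul_assoc, Real.mul_self_sqrt (hp a)]
  have hCS : (∑ a, Real.sqrt (p a) * Real.sqrt (p a * q a)) ^ 2
      ≤ (∑ a, Real.sqrt (p a) ^ 2) * ∑ a, Real.sqrt (p a * q a) ^ 2 :=
    Finset.sum_mul_sq_le_sq_mul_sq univ _ _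
  have h1 : (∑ a, Real.sqrt (p a) ^ 2) = 1 := by
    rw [← hp1]
    exact Finset.sum_congr rfl fun a _ => Real.sq_sqrt (hp a)
  have h2 : (∑ a, Real.sqrt (p a * q a) ^ 2) = ∑ a, p a * q a := by
    exact Finset.sum_congr rfl fun a _ => Real.sq_sqrt (mul_nonneg (hp a) (hq a))
  rw [h1, h2, one_mul] at hCS
  have h0 : 0 ≤ ∑ a, p a * Real.sqrt (q a) :=
    Finset.sum_nonneg fun a _ => mul_nonneg (hp a) (Real.sqrt_nonneg _)
  calc ∑ a, p a * Real.sqrt (q a)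
      = Real.sqrt ((∑ a, p a * Real.sqrt (q a)) ^ 2) := (Real.sqrt_sq h0).symm
    _ ≤ Real.sqrt (∑ a, p a * q a) := by
        apply Real.sqrt_le_sqrt
        calc (∑ a, p a * Real.sqrt (q a)) ^ 2
            = (∑ a, Real.sqrt (p a) * Real.sqrt (p a * q a)) ^ 2 := by
              congr 1
              exact Finset.sum_congr rfl fun a _ => hterm a
          _ ≤ _ := hCS

end PAaux

/-- **Corollary `cor:pa` (security of privacy amplification against quantum
adversaries)**: let `X` be a random variable with distribution `PX` on a finite set `𝒳`
with Rényi entropy of order 2 at least `n` (i.e. `∑_x P_X(x)² ≤ 2^{-n}`), and let `G` be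
a two-universal random function from `𝒳` to `{0,1}^k`, independent of `X`. Then for
every family `{ρ_x}` of density matrices on `ℂ^{2^s}`,
`d(G(X)|⟨ρ_X,G⟩) ≤ (3/4)·2^{-(n-s-k)/2}`. -/
theorem cor_pa {𝒳 : Type} [Fintype 𝒳] [DecidableEq 𝒳] (n : ℝ) (k s : ℕ)
    (PX : 𝒳 → ℝ) (hPX0 : ∀ x, 0 ≤ PX x) (hPX1 : ∑ x, PX x = 1)
    (hRenyi : ∑ x, PX x ^ 2 ≤ (2 : ℝ) ^ (-n))
    (PG : (𝒳 → (Fin k → Bool)) → ℝ) (hPG0 : ∀ g, 0 ≤ PG g) (hPG1 : ∑ g, PG g = 1)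
    (hGuniv : ∀ x x' : 𝒳, x ≠ x' →
      ∑ g ∈ univ.filter (fun g => g x = g x'), PG g
        ≤ 1 / (Fintype.card (Fin k → Bool) : ℝ))
    (ρ : 𝒳 → Matrix (Fin (2 ^ s)) (Fin (2 ^ s)) ℂ)
    (hρ : ∀ x, (ρ x).PosSemidef) (hρt : ∀ x, (ρ x).trace = 1) :
    ∑ g, PG g * dQuant PX ρ g ≤ (3 / 4) * (2 : ℝ) ^ (-(n - s - k) / 2) := by
  classical
  have hcard : Fintype.card (Fin k → Bool) = 2 ^ k := by
    simp [Fintype.card_fun]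
  have hN : 0 < Fintype.card (Fin k → Bool) := Fintype.card_pos
  set N : ℝ := (Fintype.card (Fin k → Bool) : ℝ) with hNdef
  have hN0 : (0:ℝ) < N := by
    rw [hNdef]; exact_mod_cast hN
  set t : 𝒳 → 𝒳 → ℝ := fun x x' => ((ρ x) * (ρ x')).trace.re with ht
  have ht0 : ∀ x x', 0 ≤ t x x' := fun x x' => PAaux.trace_mul_psd_re_nonneg (hρ x) (hρ x')
  have htd : ∀ x, t x x ≤ 1 := fun x => PAaux.trace_sq_re_le_one (hρ x) (hρt x)
  set c : 𝒳 → 𝒳 → ℝ := fun x x' => PX x * (PX x' * t x x') with hc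
  have hc0 : ∀ x x', 0 ≤ c x x' := fun x x' =>
    mul_nonneg (hPX0 x) (mul_nonneg (hPX0 x') (ht0 x x'))
  set T : ℝ := ∑ x, ∑ x', c x x' with hT
  -- expectation of Sg
  have hES : ∑ g, PG g * PAaux.Sg PX ρ g ≤ (2:ℝ)^(-n) := by
    have hSg : ∀ g : 𝒳 → (Fin k → Bool), PAaux.Sg PX ρ g
        = (∑ x, ∑ x', if g x' = g x then c x x' else 0) - N⁻¹ * T :=
      fun g => PAaux.Sg_eq PX ρ g hN
    have h1 : ∑ g, PG g * PAaux.Sg PX ρ g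
        = (∑ x, ∑ x',
            (∑ g ∈ univ.filter (fun g : 𝒳 → (Fin k → Bool) => g x' = g x), PG g) * c x x')
          - N⁻¹ * T := by
      calc ∑ g, PG g * PAaux.Sg PX ρ g
          = ∑ g, (PG g * (∑ x, ∑ x', if g x' = g x then c x x' else 0)
              - PG g * (N⁻¹ * T)) := by
            refine Finset.sum_congr rfl fun g _ => ?_
            rw [hSg g, mul_sub]
        _ = (∑ g, PG g * (∑ x, ∑ x', if g x' = g x then c x x' else 0))
              - (∑ g, PG g) * (N⁻¹ * T) := by
            rw [Finset.sum_sub_distrib, ← Finset.sum_mul]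
        _ = (∑ x, ∑ x',
              (∑ g ∈ univ.filter (fun g : 𝒳 → (Fin k → Bool) => g x' = g x), PG g) * c x x')
              - N⁻¹ * T := by
            rw [hPG1, one_mul]
            congr 1
            calc ∑ g, PG g * (∑ x, ∑ x', if g x' = g x then c x x' else 0)
                = ∑ g, ∑ x, ∑ x', PG g * (if g x' = g x then c x x' else 0) := by
                  refine Finset.sum_congr rfl fun g _ => ?_
                  rw [Finset.mul_sum]
                  exact Finset.sum_congr rfl fun x _ => Finset.mul_sum _ _ _
              _ = ∑ x, ∑ x', ∑ g, PG g * (if g x' = g x then c x x' else 0) := by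
                  rw [Finset.sum_comm]
                  exact Finset.sum_congr rfl fun x _ => Finset.sum_comm
              _ = ∑ x, ∑ x',
                    (∑ g ∈ univ.filter (fun g : 𝒳 → (Fin k → Bool) => g x' = g x), PG g)
                      * c x x' := by
                  refine Finset.sum_congr rfl fun x _ => Finset.sum_congr rfl fun x' _ => ?_
                  rw [Finset.sum_mul, Finset.sum_filter]
                  exact Finset.sum_congr rfl fun g _ => by rw [mul_ite, mul_zero]
    have h2 : ∀ x x',
        (∑ g ∈ univ.filter (fun g : 𝒳 → (Fin k → Bool) => g x' = g x), PG g) * c x x'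
        ≤ N⁻¹ * c x x' + (if x' = x then (1 - N⁻¹) * c x x' else 0) := by
      intro x x'
      by_cases hxx : x' = x
      · subst hxx
        have hβ : (∑ g ∈ univ.filter (fun g : 𝒳 → (Fin k → Bool) => g x' = g x'), PG g) = 1 := by
          rw [Finset.filter_true_of_mem (fun g _ => rfl), hPG1]
        rw [hβ, if_pos rfl]
        ring_nf
        exact le_refl _
      · have hβ := hGuniv x' x hxx
        rw [one_div] at hβ
        rw [if_neg hxx, add_zero]
        exact mul_le_mul_of_nonneg_right hβ (hc0 x x')
    have h3 : (∑ x, ∑ x', (N⁻¹ * c x x' + (if x' = x then (1 - N⁻¹) * c x x' else 0)))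
        = N⁻¹ * T + (1 - N⁻¹) * ∑ x, c x x := by
      rw [hT, Finset.mul_sum, Finset.mul_sum, ← Finset.sum_add_distrib]
      refine Finset.sum_congr rfl fun x _ => ?_
      rw [Finset.sum_add_distrib, ← Finset.mul_sum]
      congr 1
      simp
    have h4 : ∑ g, PG g * PAaux.Sg PX ρ g ≤ (1 - N⁻¹) * ∑ x, c x x := by
      rw [h1]
      have := Finset.sum_le_sum (s := (univ : Finset 𝒳)) fun x _ =>
        Finset.sum_le_sum (s := (univ : Finset 𝒳)) fun x' _ => h2 x x'
      calc _ ≤ (∑ x, ∑ x', (N⁻¹ * c x x' + (if x' = x then (1 - N⁻¹) * c x x' else 0)))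
            - N⁻¹ * T := by linarith
        _ = (1 - N⁻¹) * ∑ x, c x x := by rw [h3]; ring
    have h5 : ∑ x, c x x ≤ ∑ x, PX x ^ 2 := by
      refine Finset.sum_le_sum fun x _ => ?_
      have : PX x * (PX x * t x x) ≤ PX x * (PX x * 1) :=
        mul_le_mul_of_nonneg_left
          (mul_le_mul_of_nonneg_left (htd x) (hPX0 x)) (hPX0 x)
      calc c x x ≤ PX x * (PX x * 1) := this
        _ = PX x ^ 2 := by ring
    have h6 : (1 - N⁻¹) * ∑ x, c x x ≤ ∑ x, c x x := by
      have h7 : 0 ≤ ∑ x, c x x := Finset.sum_nonneg fun x _ => hc0 x x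
      nlinarith [inv_nonneg.mpr hN0.le]
    linarith [h4, h5, h6, hRenyi]
  -- assemble
  have hg : ∀ g : 𝒳 → (Fin k → Bool), dQuant PX ρ g
      ≤ (1/2) * Real.sqrt ((2^s : ℕ) * N * PAaux.Sg PX ρ g) :=
    fun g => PAaux.dQuant_le_sqrt PX hPX0 ρ hρ g
  have hSg0 : ∀ g : 𝒳 → (Fin k → Bool), 0 ≤ PAaux.Sg PX ρ g :=
    fun g => PAaux.Sg_nonneg PX ρ hρ g
  set D : ℝ := ((2^s : ℕ) : ℝ) with hD
  have hD0 : 0 < D := by rw [hD]; positivity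
  have main : ∑ g, PG g * dQuant PX ρ g
      ≤ (1/2) * Real.sqrt (D * N * (2:ℝ)^(-n)) := by
    calc ∑ g, PG g * dQuant PX ρ g
        ≤ ∑ g, PG g * ((1/2) * Real.sqrt (D * N * PAaux.Sg PX ρ g)) :=
          Finset.sum_le_sum fun g _ => mul_le_mul_of_nonneg_left (hg g) (hPG0 g)
      _ = (1/2) * ∑ g, PG g * Real.sqrt (D * N * PAaux.Sg PX ρ g) := by
          rw [Finset.mul_sum]
          exact Finset.sum_congr rfl fun g _ => by ring
      _ ≤ (1/2) * Real.sqrt (∑ g, PG g * (D * N * PAaux.Sg PX ρ g)) := by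
          have := PAaux.jensen_sqrt PG (fun g => D * N * PAaux.Sg PX ρ g) hPG0
            (fun g => mul_nonneg (mul_nonneg hD0.le hN0.le) (hSg0 g)) hPG1
          linarith
      _ ≤ (1/2) * Real.sqrt (D * N * (2:ℝ)^(-n)) := by
          have heq : ∑ g, PG g * (D * N * PAaux.Sg PX ρ g)
              = D * N * ∑ g, PG g * PAaux.Sg PX ρ g := by
            rw [Finset.mul_sum]
            exact Finset.sum_congr rfl fun g _ => by ring
          have hle : ∑ g, PG g * (D * N * PAaux.Sg PX ρ g) ≤ D * N * (2:ℝ)^(-n) := by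
            rw [heq]
            exact mul_le_mul_of_nonneg_left hES (mul_nonneg hD0.le hN0.le)
          have := Real.sqrt_le_sqrt hle
          linarith
  -- numerics
  have hval : D * N * (2:ℝ)^(-n) = (2:ℝ) ^ ((s:ℝ) + (k:ℝ) - n) := by
    rw [hD, hNdef, hcard]
    push_cast
    rw [← Real.rpow_natCast 2 s, ← Real.rpow_natCast 2 k, ← Real.rpow_add (by norm_num),
      ← Real.rpow_add (by norm_num)]
    ring_nf
  have hsqrt : Real.sqrt ((2:ℝ) ^ ((s:ℝ) + (k:ℝ) - n)) = (2:ℝ) ^ (-(n - s - k)/2) := by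
    rw [Real.sqrt_eq_rpow, ← Real.rpow_mul (by norm_num)]
    congr 1
    ring
  have hfinal : (1/2) * Real.sqrt (D * N * (2:ℝ)^(-n)) ≤ (3/4) * (2:ℝ) ^ (-(n - s - k)/2) := by
    rw [hval, hsqrt]
    have hp : 0 < (2:ℝ) ^ (-(n - s - k)/2) := Real.rpow_pos_of_pos (by norm_num) _
    nlinarith
  linarith
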